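/- Let G be a graph of diameter 2 and S a mutual-visibility set of size s. Then C(s,2) − e(S) ≤ Σ_{w ∈ V(G)\S} C(|N(w) ∩ S|, 2), where e(S) is the number of edges of the induced subgraph G[S] and C(n,k) denotes binomial coefficients. -/

import Mathlib

open scoped Classical

def SimpleGraph.MutualVisibilitySet {V : Type*} (G : SimpleGraph V) (S : Set V) : Prop :=
  ∀ u ∈ S, ∀ v ∈ S, ∃ p : G.Walk u v, p.length = G.dist u v ∧
    ∀ w ∈ p.support, w ∈ S → w = u ∨ w = v

noncomputable def edgesWithin {V : Type*} (G : SimpleGraph V) (S : Set V) : ℕ :=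
  {e ∈ G.edgeSet | ∀ v ∈ e, v ∈ S}.ncard

private lemma exists_common_neighbor {V : Type*} [DecidableEq V] (G : SimpleGraph V)
    (hdiam : G.diam = 2) (S : Finset V) (hS : G.MutualVisibilitySet ↑S)
    {u v : V} (hu : u ∈ S) (hv : v ∈ S) (hne : u ≠ v) (hadj : ¬ G.Adj u v) :
    ∃ w, w ∉ S ∧ G.Adj w u ∧ G.Adj w v := by
  obtain ⟨p, hlen, hsupp⟩ := hS u (by simpa) v (by simpa)
  have hreach : G.Reachable u v := ⟨p⟩
  have hd2 : G.dist u v ≤ 2 := by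
    rw [← hdiam]
    exact G.dist_le_diam (SimpleGraph.ediam_ne_top_of_diam_ne_zero (by omega))
  have hd1 : G.dist u v ≠ 1 := fun h => hadj (SimpleGraph.dist_eq_one_iff_adj.mp h)
  have hdpos : 0 < G.dist u v := hreach.pos_dist_of_ne hne
  have hlen2 : p.length = 2 := by omega
  have h01 : G.Adj u (p.getVert 1) := by
    have := p.adj_getVert_succ (i := 0) (by omega)
    simpa [p.getVert_zero] using this
  have h2v : p.getVert 2 = v := by rw [← hlen2]; exact p.getVert_length
  have h12 : G.Adj (p.getVert 1) v := by
    have := p.adj_getVert_succ (i := 1) (by omega)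
    rwa [h2v] at this
  have hmem : p.getVert 1 ∈ p.support :=
    SimpleGraph.Walk.mem_support_iff_exists_getVert.mpr ⟨1, rfl, by omega⟩
  refine ⟨p.getVert 1, ?_, h01.symm, h12⟩
  intro hwS
  rcases hsupp _ hmem (by simpa using hwS) with h | h
  · exact G.irrefl (h ▸ h01)
  · exact G.irrefl (h ▸ h12)

theorem stmt1 {V : Type*} [Fintype V] [DecidableEq V] (G : SimpleGraph V)
    (hdiam : G.diam = 2) (S : Finset V) (hS : G.MutualVisibilitySet ↑S) :
    S.card.choose 2 - edgesWithin G ↑S ≤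
      ∑ w ∈ Sᶜ, ({u ∈ (S : Set V) | G.Adj w u}.ncard).choose 2 := by
  cases isEmpty_or_nonempty V with
  | inl h =>
    have hs : S = ∅ := Finset.eq_empty_of_isEmpty S
    simp [hs]
  | inr h =>
  classical
  set P := S.powersetCard 2 with hP
  set pred := fun q : Finset V => ∃ u ∈ q, ∃ v ∈ q, G.Adj u v with hpred
  set E := P.filter pred with hE
  set NA := P.filter (fun q => ¬ pred q) with hNA
  set T := {e ∈ G.edgeSet | ∀ x ∈ e, x ∈ (S : Set V)} with hT
  -- every non-adjacent pair has an external common neighbor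
  have hNAmem : ∀ q ∈ NA, ∃ w, w ∉ S ∧ ∀ x ∈ q, G.Adj w x := by
    intro q hq
    simp only [hNA, Finset.mem_filter, hP, Finset.mem_powersetCard] at hq
    obtain ⟨⟨hqS, hqcard⟩, hnp⟩ := hq
    obtain ⟨u, v, huv, rfl⟩ := Finset.card_eq_two.mp hqcard
    have hu : u ∈ S := hqS (by simp)
    have hv : v ∈ S := hqS (by simp)
    have hadj : ¬ G.Adj u v := fun ha => hnp ⟨u, by simp, v, by simp, ha⟩
    obtain ⟨w, hwS, hwu, hwv⟩ := exists_common_neighbor G hdiam S hS hu hv huv hadj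
    refine ⟨w, hwS, ?_⟩
    intro x hx
    rcases Finset.mem_insert.mp hx with rfl | hx
    · exact hwu
    · rw [Finset.mem_singleton.mp hx]; exact hwv
  set g : Finset V → V := fun q =>
    if h : ∃ w, w ∉ S ∧ ∀ x ∈ q, G.Adj w x then h.choose else Classical.arbitrary V
    with hg
  have hgspec : ∀ q ∈ NA, g q ∉ S ∧ ∀ x ∈ q, G.Adj (g q) x := by
    intro q hq
    have h := hNAmem q hq
    simp only [hg, dif_pos h]
    exact h.choose_spec
  -- fiber decomposition
  have hfib : NA.card = ∑ w ∈ Sᶜ, (NA.filter (fun q => g q = w)).card :=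
    Finset.card_eq_sum_card_fiberwise (fun q hq => Finset.mem_compl.mpr (hgspec q hq).1)
  have hbound : ∀ w ∈ Sᶜ, (NA.filter (fun q => g q = w)).card ≤
      ({u ∈ (S : Set V) | G.Adj w u}.ncard).choose 2 := by
    intro w _
    have hsub : NA.filter (fun q => g q = w) ⊆
        (S.filter (fun u => G.Adj w u)).powersetCard 2 := by
      intro q hq
      obtain ⟨hqNA, hgq⟩ := Finset.mem_filter.mp hq
      have hsp := hgspec q hqNA
      rw [hgq] at hsp
      have hq' : q ∈ P := (Finset.mem_filter.mp hqNA).1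
      rw [hP, Finset.mem_powersetCard] at hq'
      rw [Finset.mem_powersetCard]
      exact ⟨fun x hx => Finset.mem_filter.mpr ⟨hq'.1 hx, hsp.2 x hx⟩, hq'.2⟩
    calc (NA.filter (fun q => g q = w)).card
        ≤ ((S.filter (fun u => G.Adj w u)).powersetCard 2).card :=
          Finset.card_le_card hsub
      _ = (S.filter (fun u => G.Adj w u)).card.choose 2 :=
          Finset.card_powersetCard 2 _
      _ = ({u ∈ (S : Set V) | G.Adj w u}.ncard).choose 2 := by
          congr 1
          rw [← Set.ncard_coe_finset]
          congr 1
          ext x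
          simp
  -- counting adjacent pairs
  set f : Finset V → Sym2 V := fun q =>
    if h : ∃ u ∈ q, ∃ v ∈ q, G.Adj u v then s(h.choose, h.choose_spec.2.choose)
    else Sym2.diag (Classical.arbitrary V) with hf
  have hfspec : ∀ q ∈ E, ∃ u v, f q = s(u, v) ∧ q = {u, v} ∧ G.Adj u v := by
    intro q hq
    obtain ⟨hqP, hp⟩ := Finset.mem_filter.mp hq
    rw [hP, Finset.mem_powersetCard] at hqP
    refine ⟨hp.choose, hp.choose_spec.2.choose, by exact dif_pos (show ∃ u ∈ q, ∃ v ∈ q, G.Adj u v from hp), ?_,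
      hp.choose_spec.2.choose_spec.2⟩
    have hu := hp.choose_spec.1
    have hv := hp.choose_spec.2.choose_spec.1
    have hne := hp.choose_spec.2.choose_spec.2.ne
    have hsub : ({hp.choose, hp.choose_spec.2.choose} : Finset V) ⊆ q := by
      intro x hx
      rcases Finset.mem_insert.mp hx with rfl | hx
      · exact hu
      · rw [Finset.mem_singleton.mp hx]; exact hv
    refine (Finset.eq_of_subset_of_card_le hsub ?_).symm
    rw [Finset.card_pair hne, hqP.2]
  have hinj : Set.InjOn f ↑E := by
    intro q hq q' hq' heq
    obtain ⟨u, v, hfq, hq2, hadj⟩ := hfspec q hq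
    obtain ⟨u', v', hfq', hq2', hadj'⟩ := hfspec q' hq'
    rw [hfq, hfq', Sym2.eq_iff] at heq
    rcases heq with ⟨rfl, rfl⟩ | ⟨rfl, rfl⟩
    · rw [hq2, hq2']
    · rw [hq2, hq2', Finset.pair_comm]
  have hfT : ∀ q ∈ E, f q ∈ T := by
    intro q hq
    obtain ⟨u, v, hfq, hq2, hadj⟩ := hfspec q hq
    have hqS : q ⊆ S := by
      have := (Finset.mem_filter.mp hq).1
      rw [hP, Finset.mem_powersetCard] at this
      exact this.1
    rw [hfq, hT]
    refine ⟨hadj, ?_⟩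
    intro x hx
    rcases Sym2.mem_iff.mp hx with rfl | rfl
    · exact hqS (hq2 ▸ Finset.mem_insert_self _ _)
    · exact hqS (hq2 ▸ Finset.mem_insert_of_mem (Finset.mem_singleton_self _))
  have hTfin : T.Finite := Set.toFinite T
  have hEcard : E.card ≤ T.ncard := by
    calc E.card = (E.image f).card := (Finset.card_image_of_injOn hinj).symm
      _ ≤ hTfin.toFinset.card := by
          apply Finset.card_le_card
          intro e he
          obtain ⟨q, hq, rfl⟩ := Finset.mem_image.mp he
          exact hTfin.mem_toFinset.mpr (hfT q hq)
      _ = T.ncard := (Set.ncard_eq_toFinset_card T hTfin).symm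
  have hsplit : E.card + NA.card = S.card.choose 2 := by
    rw [hE, hNA, Finset.card_filter_add_card_filter_not, hP,
      Finset.card_powersetCard]
  have hEW : edgesWithin G ↑S = T.ncard := rfl
  have hRHS : NA.card ≤ ∑ w ∈ Sᶜ, ({u ∈ (S : Set V) | G.Adj w u}.ncard).choose 2 := by
    rw [hfib]; exact Finset.sum_le_sum hbound
  rw [hEW] at *
  omega
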